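/- Dedekind reciprocity: for coprime positive integers n and k, s(1,k;n) + s(1,n;k) = (1/12)(n/k + 1/(nk) + k/n) - 1/4, where s(a,b;n) = Σ_{i=1}^{n-1} ((ia/n))((ib/n)) and ((x)) = x - ⌊x⌋ - 1/2. -/

import Mathlib

/-- The sawtooth function `((x)) = x - ⌊x⌋ - 1/2` for non-integer `x`, and `0` for integer `x`. -/
def saw (x : ℚ) : ℚ := if x.den = 1 then 0 else x - ⌊x⌋ - 1/2

/-- The generalized Dedekind sum `s(a,b;n) = ∑_{i=1}^{n-1} ((ia/n))((ib/n))`. -/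
def dS (a b : ℤ) (n : ℕ) : ℚ :=
  ∑ i ∈ Finset.range n, saw (i * a / n) * saw (i * b / n)

open Finset

-- Gauss sums
lemma gauss1 (n : ℕ) : ∑ i ∈ range n, (i : ℚ) = n * (n - 1) / 2 := by
  induction n with
  | zero => simp
  | succ m ih => rw [Finset.sum_range_succ, ih]; push_cast; ring

lemma gauss2 (n : ℕ) : ∑ i ∈ range n, (i : ℚ) ^ 2 = n * (n - 1) * (2 * n - 1) / 6 := by
  induction n with
  | zero => simp
  | succ m ih => rw [Finset.sum_range_succ, ih]; push_cast; ring

-- div/mod reindexing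
lemma sum_divmod (n k : ℕ) (f : ℕ → ℚ) :
    ∑ t ∈ range (n * k), f t = ∑ q ∈ range n, ∑ r ∈ range k, f (q * k + r) := by
  induction n with
  | zero => simp
  | succ m ih =>
      rw [Nat.succ_mul, Finset.sum_range_add, ih, Finset.sum_range_succ]

-- CRT reindexing
lemma crt_sum (n k : ℕ) (hn : 0 < n) (hk : 0 < k) (hco : Nat.Coprime n k) (f g : ℕ → ℚ) :
    ∑ t ∈ range (n * k), f (t % n) * g (t % k)
      = (∑ a ∈ range n, f a) * (∑ b ∈ range k, g b) := by
  rw [Finset.sum_mul_sum, ← Finset.sum_product']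
  refine Finset.sum_nbij' (fun t => (t % n, t % k))
    (fun p => (Nat.chineseRemainder hco p.1 p.2 : ℕ)) ?_ ?_ ?_ ?_ ?_
  · intro t ht
    simp only [Finset.mem_product, Finset.mem_range] at *
    exact ⟨Nat.mod_lt _ hn, Nat.mod_lt _ hk⟩
  · intro p hp
    simp only [Finset.mem_range] at *
    exact Nat.chineseRemainder_lt_mul hco p.1 p.2 hn.ne' hk.ne'
  · intro t ht
    simp only [Finset.mem_range] at ht
    have h := (Nat.chineseRemainder hco (t % n) (t % k)).2
    have h1 : (Nat.chineseRemainder hco (t % n) (t % k) : ℕ) ≡ t [MOD n] :=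
      h.1.trans (Nat.mod_modEq t n)
    have h2 : (Nat.chineseRemainder hco (t % n) (t % k) : ℕ) ≡ t [MOD k] :=
      h.2.trans (Nat.mod_modEq t k)
    exact ((Nat.modEq_and_modEq_iff_modEq_mul hco).mp ⟨h1, h2⟩).eq_of_lt_of_lt
      (Nat.chineseRemainder_lt_mul hco _ _ hn.ne' hk.ne') ht
  · rintro ⟨a, b⟩ hp
    simp only [Finset.mem_product, Finset.mem_range] at hp
    have h := (Nat.chineseRemainder hco a b).2
    have h1 : (Nat.chineseRemainder hco a b : ℕ) % n = a := by
      have := h.1; rw [Nat.ModEq, Nat.mod_eq_of_lt hp.1] at this; exact this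
    have h2 : (Nat.chineseRemainder hco a b : ℕ) % k = b := by
      have := h.2; rw [Nat.ModEq, Nat.mod_eq_of_lt hp.2] at this; exact this
    simp [h1, h2]
  · intro t ht; rfl


-- permutation of residues
lemma sum_mulmod (n k : ℕ) (hn : 0 < n) (hco : Nat.Coprime k n) (f : ℕ → ℚ) :
    ∑ i ∈ range n, f (k * i % n) = ∑ j ∈ range n, f j := by
  have hinj : ∀ x ∈ range n, ∀ y ∈ range n, k * x % n = k * y % n → x = y := by
    intro x hx y hy hxy
    simp only [Finset.mem_range] at hx hy
    have h : k * x ≡ k * y [MOD n] := hxy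
    have := Nat.ModEq.cancel_left_of_coprime (by rwa [Nat.coprime_comm] at hco) h
    exact this.eq_of_lt_of_lt hx hy
  have himg : (range n).image (fun i => k * i % n) = range n := by
    apply Finset.eq_of_subset_of_card_le
    · intro x hx
      simp only [Finset.mem_image, Finset.mem_range] at *
      obtain ⟨i, _, rfl⟩ := hx
      exact Nat.mod_lt _ hn
    · rw [Finset.card_image_of_injOn fun x hx y hy => hinj x hx y hy]
  conv_rhs => rw [← himg]
  exact (Finset.sum_image hinj).symm

-- floor and saw of a/n
lemma floor_nat_div (a n : ℕ) : ⌊(a : ℚ) / (n : ℚ)⌋ = (a / n : ℕ) := by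
  rw [show ((a : ℚ)) = ((a : ℤ) : ℚ) by push_cast; ring, Rat.floor_intCast_div_natCast]
  exact (Int.natCast_div a n).symm

lemma saw_nat_div (a n : ℕ) (hn : 0 < n) (h : ¬ n ∣ a) :
    saw ((a : ℚ) / (n : ℚ)) = ((a % n : ℕ) : ℚ) / n - 1/2 := by
  have hn0 : (n : ℚ) ≠ 0 := Nat.cast_ne_zero.mpr hn.ne'
  have hden : ((a : ℚ) / n).den ≠ 1 := by
    intro h1
    have h2 : ((((a : ℚ) / n).num : ℚ)) = (a : ℚ) / n := (Rat.den_eq_one_iff _).mp h1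
    have h3 : (a : ℚ) = n * ((a : ℚ) / n).num := by
      field_simp at h2; linarith [h2]
    have h4 : (a : ℤ) = n * ((a : ℚ) / n).num := by exact_mod_cast h3
    exact h ((Int.natCast_dvd_natCast (m := n) (n := a)).mp ⟨_, h4⟩)
  rw [saw, if_neg hden, floor_nat_div]
  have hmod : (a : ℚ) = n * ((a / n : ℕ) : ℚ) + ((a % n : ℕ) : ℚ) := by
    exact_mod_cast congrArg (Nat.cast : ℕ → ℚ) (Nat.div_add_mod a n).symm
  have h2 : ((a % n : ℕ) : ℚ) = (a : ℚ) - n * ((a / n : ℕ) : ℚ) := by linarith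
  rw [h2, Int.cast_natCast]
  field_simp


-- filter card: {i ∈ [1,n) : t < k*i}
lemma filt1 (n k t : ℕ) (hk : 0 < k) :
    ((Ico 1 n).filter fun i => t < k * i) = Ico (t / k + 1) n := by
  ext i
  simp only [Finset.mem_filter, Finset.mem_Ico]
  have h : t / k < i ↔ t < i * k := Nat.div_lt_iff_lt_mul hk
  rw [mul_comm k i]
  constructor
  · rintro ⟨⟨h1, h2⟩, h3⟩
    exact ⟨h.mpr h3, h2⟩
  · rintro ⟨h1, h2⟩
    exact ⟨⟨le_trans (Nat.le_add_left 1 (t / k)) h1, h2⟩, h.mp (Nat.lt_of_succ_le h1)⟩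

-- filter card: {j ∈ [1,k) : n*j < m} with n ∤ m and m < n*k
lemma filt2 (k n m : ℕ) (hn : 0 < n) (hnd : ¬ n ∣ m) (hm : m < n * k) :
    ((Ico 1 k).filter fun j => n * j < m) = Ico 1 (m / n + 1) := by
  ext j
  simp only [Finset.mem_filter, Finset.mem_Ico]
  have h1 : j ≤ m / n ↔ j * n ≤ m := Nat.le_div_iff_mul_le hn
  have h2 : n * j ≠ m := by rintro rfl; exact hnd ⟨j, rfl⟩
  have h3 : m / n < k := by
    rw [Nat.div_lt_iff_lt_mul hn, mul_comm k n]; exact hm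
  rw [mul_comm n j]
  constructor
  · rintro ⟨⟨g1, g2⟩, g3⟩
    refine ⟨g1, Nat.lt_succ_of_le (h1.mpr g3.le)⟩
  · rintro ⟨g1, g2⟩
    have g3 : j * n ≤ m := h1.mp (Nat.lt_succ_iff.mp g2)
    have g4 : j * n ≠ m := by rw [mul_comm]; exact h2
    exact ⟨⟨g1, lt_of_le_of_lt (Nat.lt_succ_iff.mp g2) h3⟩, lt_of_le_of_ne g3 g4⟩

lemma min_card (N x y : ℕ) (hx : x ≤ N) (hy : y ≤ N) :
    min x y = ∑ t ∈ range N, if t < x ∧ t < y then 1 else 0 := by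
  rw [← Finset.card_filter]
  have : (range N).filter (fun t => t < x ∧ t < y) = range (min x y) := by
    ext t; simp only [Finset.mem_filter, Finset.mem_range, lt_min_iff]; omega
  rw [this, Finset.card_range]

-- swap lemma for the min double sum
lemma min_swap (n k : ℕ) (hn : 0 < n) (hk : 0 < k) :
    ∑ i ∈ Ico 1 n, ∑ j ∈ Ico 1 k, min (k * i) (n * j)
      = ∑ t ∈ range (n * k), (n - 1 - t / k) * (k - 1 - t / n) := by
  have step1 : ∀ i ∈ Ico 1 n, ∀ j ∈ Ico 1 k,
      min (k * i) (n * j) = ∑ t ∈ range (n * k), if t < k * i ∧ t < n * j then 1 else 0 := by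
    intro i hi j hj
    simp only [Finset.mem_Ico] at hi hj
    exact min_card _ _ _ (Nat.mul_le_mul le_rfl hi.2.le |>.trans (by rw [mul_comm]))
      (Nat.mul_le_mul le_rfl hj.2.le)
  rw [Finset.sum_congr rfl fun i hi => Finset.sum_congr rfl fun j hj => step1 i hi j hj]
  rw [Finset.sum_congr rfl fun i hi => Finset.sum_comm]
  rw [Finset.sum_comm]
  refine Finset.sum_congr rfl fun t ht => ?_
  simp only [Finset.mem_range] at ht
  have hsplit : ∀ i ∈ Ico 1 n, ∀ j ∈ Ico 1 k, (if t < k * i ∧ t < n * j then 1 else 0)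
      = (if t < k * i then 1 else 0) * (if t < n * j then 1 else 0) := by
    intro i _ j _
    by_cases h1 : t < k * i <;> by_cases h2 : t < n * j <;> simp [h1, h2]
  rw [Finset.sum_congr rfl fun i hi => Finset.sum_congr rfl fun j hj => hsplit i hi j hj]
  have hfac : ∀ i ∈ Ico 1 n, (∑ j ∈ Ico 1 k, (if t < k * i then 1 else 0) * (if t < n * j then 1 else 0))
      = (if t < k * i then 1 else 0) * ∑ j ∈ Ico 1 k, (if t < n * j then 1 else 0) := by
    intro i _; rw [Finset.mul_sum]
  rw [Finset.sum_congr rfl hfac, ← Finset.sum_mul]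
  have c1 : (∑ i ∈ Ico 1 n, if t < k * i then 1 else 0) = n - 1 - t / k := by
    rw [← Finset.card_filter, filt1 n k t hk, Nat.card_Ico]
    omega
  have c2 : (∑ j ∈ Ico 1 k, if t < n * j then 1 else 0) = k - 1 - t / n := by
    rw [← Finset.card_filter, filt1 k n t hn, Nat.card_Ico]
    omega
  rw [c1, c2]



lemma not_dvd_aux (n k i : ℕ) (hco : Nat.Coprime n k) (h1 : 1 ≤ i) (h2 : i < n) :
    ¬ n ∣ k * i := by
  intro hdvd
  rw [mul_comm] at hdvd
  have : n ∣ i := hco.dvd_of_dvd_mul_right hdvd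
  exact absurd (Nat.le_of_dvd h1 this) (by omega)


lemma max_split (n k : ℕ) (hn : 0 < n) (hk : 0 < k) (hco : Nat.Coprime n k) :
    ∑ i ∈ Ico 1 n, ∑ j ∈ Ico 1 k, max (k * i) (n * j)
      = (∑ i ∈ Ico 1 n, k * i * (k * i / n)) + (∑ j ∈ Ico 1 k, n * j * (n * j / k)) := by
  have hne : ∀ i ∈ Ico 1 n, ∀ j ∈ Ico 1 k, k * i ≠ n * j := by
    intro i hi j hj heq
    simp only [Finset.mem_Ico] at hi hj
    exact not_dvd_aux n k i hco hi.1 hi.2 ⟨j, heq⟩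
  have hmax : ∀ i ∈ Ico 1 n, ∀ j ∈ Ico 1 k, max (k * i) (n * j)
      = (if n * j < k * i then k * i else 0) + (if k * i < n * j then n * j else 0) := by
    intro i hi j hj
    have := hne i hi j hj
    rcases Nat.lt_or_ge (n * j) (k * i) with h | h
    · rw [max_eq_left h.le, if_pos h, if_neg (by omega), add_zero]
    · have hlt : k * i < n * j := by omega
      rw [max_eq_right h, if_neg (by omega), if_pos hlt, zero_add]
  rw [Finset.sum_congr rfl fun i hi => Finset.sum_congr rfl fun j hj => hmax i hi j hj]
  rw [Finset.sum_congr rfl fun i _ => Finset.sum_add_distrib, Finset.sum_add_distrib]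
  congr 1
  · refine Finset.sum_congr rfl fun i hi => ?_
    simp only [Finset.mem_Ico] at hi
    rw [← Finset.sum_filter, filt2 k n (k * i) hn (not_dvd_aux n k i hco hi.1 hi.2)
      (by calc k * i < k * n := by exact (Nat.mul_lt_mul_left hk).mpr hi.2
               _ = n * k := mul_comm k n),
      Finset.sum_const, Nat.card_Ico, smul_eq_mul]
    rw [Nat.add_sub_cancel, mul_comm]
  · rw [Finset.sum_comm]
    refine Finset.sum_congr rfl fun j hj => ?_
    simp only [Finset.mem_Ico] at hj
    rw [← Finset.sum_filter, filt2 n k (n * j) hk (not_dvd_aux k n j hco.symm hj.1 hj.2)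
      (by calc n * j < n * k := by exact (Nat.mul_lt_mul_left hn).mpr hj.2
               _ = k * n := mul_comm n k),
      Finset.sum_const, Nat.card_Ico, smul_eq_mul]
    rw [Nat.add_sub_cancel, mul_comm]

lemma key_count (n k : ℕ) (hn : 0 < n) (hk : 0 < k) (hco : Nat.Coprime n k) :
    (∑ i ∈ Ico 1 n, k * i * (k * i / n)) + (∑ j ∈ Ico 1 k, n * j * (n * j / k))
      + ∑ t ∈ range (n * k), (n - 1 - t / k) * (k - 1 - t / n)
      = ∑ i ∈ Ico 1 n, ∑ j ∈ Ico 1 k, (k * i + n * j) := by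
  rw [← max_split n k hn hk hco, ← min_swap n k hn hk, ← Finset.sum_add_distrib]
  refine Finset.sum_congr rfl fun i _ => ?_
  rw [← Finset.sum_add_distrib]
  exact Finset.sum_congr rfl fun j _ => max_add_min _ _



-- ∑_{t < a*b} (t % b) = a * (b(b-1)/2)
lemma sum_mod (a b : ℕ) : ∑ t ∈ range (a * b), ((t % b : ℕ) : ℚ) = a * (b * (b - 1) / 2) := by
  rw [sum_divmod a b]
  have h : ∀ q ∈ range a, ∑ r ∈ range b, (((q * b + r) % b : ℕ) : ℚ) = b * (b - 1) / 2 := by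
    intro q _
    rw [← gauss1 b]
    refine Finset.sum_congr rfl fun r hr => ?_
    simp only [Finset.mem_range] at hr
    rw [show q * b + r = b * q + r by ring, Nat.mul_add_mod, Nat.mod_eq_of_lt hr]
  rw [Finset.sum_congr rfl h, Finset.sum_const, Finset.card_range, nsmul_eq_mul]

-- ∑_{t < a*b} t * (t % b)
lemma sum_t_mod (a b : ℕ) : ∑ t ∈ range (a * b), (t : ℚ) * ((t % b : ℕ) : ℚ)
    = b * (b * (b - 1) / 2) * (a * (a - 1) / 2) + a * (b * (b - 1) * (2 * b - 1) / 6) := by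
  rw [sum_divmod a b]
  have h : ∀ q ∈ range a, ∑ r ∈ range b, ((q * b + r : ℕ) : ℚ) * (((q * b + r) % b : ℕ) : ℚ)
      = (q : ℚ) * b * (b * (b - 1) / 2) + b * (b - 1) * (2 * b - 1) / 6 := by
    intro q _
    have h2 : ∀ r ∈ range b, ((q * b + r : ℕ) : ℚ) * (((q * b + r) % b : ℕ) : ℚ)
        = (q : ℚ) * b * (r : ℚ) + (r : ℚ) ^ 2 := by
      intro r hr
      simp only [Finset.mem_range] at hr
      rw [show q * b + r = b * q + r by ring, Nat.mul_add_mod, Nat.mod_eq_of_lt hr]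
      push_cast
      ring
    rw [Finset.sum_congr rfl h2, Finset.sum_add_distrib, ← Finset.mul_sum, gauss1, gauss2]
  rw [Finset.sum_congr rfl h, Finset.sum_add_distrib, ← Finset.sum_mul, ← Finset.sum_mul, gauss1,
    Finset.sum_const, Finset.card_range, nsmul_eq_mul]
  ring


lemma ico_g1 (m : ℕ) : ∑ i ∈ Ico 1 m, (i : ℚ) = m * (m - 1) / 2 := by
  rcases Nat.eq_zero_or_pos m with h | h
  · subst h; simp
  · rw [← gauss1, Finset.range_eq_Ico, Finset.sum_eq_sum_Ico_succ_bot h]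
    simp

-- the M sum, evaluated
lemma M_eval (n k : ℕ) (hn : 0 < n) (hk : 0 < k) (hco : Nat.Coprime n k) :
    ∑ t ∈ range (n * k), ((n - 1 - t / k : ℕ) : ℚ) * ((k - 1 - t / n : ℕ) : ℚ)
      = (1 / ((n : ℚ) * k)) *
        ((n * k) * (((k : ℚ) * (n - 1)) * ((n : ℚ) * (k - 1)))
          + (n * k : ℚ) * (n * k - 1) * (2 * (n * k) - 1) / 6
          - (((k : ℚ) * (n - 1)) + ((n : ℚ) * (k - 1))) * ((n * k : ℚ) * (n * k - 1) / 2)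
          + ((k : ℚ) * (n - 1)) * ((k : ℚ) * (n * (n - 1) / 2))
          + ((n : ℚ) * (k - 1)) * ((n : ℚ) * (k * (k - 1) / 2))
          - ((n : ℚ) * (n * (n - 1) / 2) * (k * (k - 1) / 2) + k * (n * (n - 1) * (2 * n - 1) / 6))
          - ((k : ℚ) * (k * (k - 1) / 2) * (n * (n - 1) / 2) + n * (k * (k - 1) * (2 * k - 1) / 6))
          + (n * (n - 1) / 2 : ℚ) * (k * (k - 1) / 2)) := by
  have hn0 : (n : ℚ) ≠ 0 := Nat.cast_ne_zero.mpr hn.ne'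
  have hk0 : (k : ℚ) ≠ 0 := Nat.cast_ne_zero.mpr hk.ne'
  have hterm : ∀ t ∈ range (n * k), ((n - 1 - t / k : ℕ) : ℚ) * ((k - 1 - t / n : ℕ) : ℚ)
      = (1 / ((n : ℚ) * k)) *
        ((((k : ℚ) * (n - 1)) * ((n : ℚ) * (k - 1))
          + (t : ℚ) ^ 2
          - (((k : ℚ) * (n - 1)) + ((n : ℚ) * (k - 1))) * (t : ℚ)
          + ((k : ℚ) * (n - 1)) * ((t % n : ℕ) : ℚ)
          + ((n : ℚ) * (k - 1)) * ((t % k : ℕ) : ℚ)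
          - (t : ℚ) * ((t % n : ℕ) : ℚ)
          - (t : ℚ) * ((t % k : ℕ) : ℚ)
          + ((t % k : ℕ) : ℚ) * ((t % n : ℕ) : ℚ))) := by
    intro t ht
    simp only [Finset.mem_range] at ht
    have hdk : t / k < n := (Nat.div_lt_iff_lt_mul hk).mpr ht
    have hdn : t / n < k := (Nat.div_lt_iff_lt_mul hn).mpr (by rw [mul_comm k n]; exact ht)
    have e1 : ((n - 1 - t / k : ℕ) : ℚ) = (n : ℚ) - 1 - ((t / k : ℕ) : ℚ) := by
      rw [show n - 1 - t / k = n - (t / k + 1) by omega, Nat.cast_sub (by omega)]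
      push_cast; ring
    have e2 : ((k - 1 - t / n : ℕ) : ℚ) = (k : ℚ) - 1 - ((t / n : ℕ) : ℚ) := by
      rw [show k - 1 - t / n = k - (t / n + 1) by omega, Nat.cast_sub (by omega)]
      push_cast; ring
    have q1 : ((t / k : ℕ) : ℚ) = ((t : ℚ) - ((t % k : ℕ) : ℚ)) / k := by
      have := congrArg (Nat.cast (R := ℚ)) (Nat.div_add_mod t k)
      push_cast at this
      field_simp
      linarith
    have q2 : ((t / n : ℕ) : ℚ) = ((t : ℚ) - ((t % n : ℕ) : ℚ)) / n := by
      have := congrArg (Nat.cast (R := ℚ)) (Nat.div_add_mod t n)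
      push_cast at this
      field_simp
      linarith
    rw [e1, e2, q1, q2]
    field_simp
    ring
  rw [Finset.sum_congr rfl hterm, ← Finset.mul_sum]
  congr 1
  have hC : ∑ _t ∈ range (n * k), ((k : ℚ) * (n - 1)) * ((n : ℚ) * (k - 1))
      = ((n : ℚ) * k) * (((k : ℚ) * (n - 1)) * ((n : ℚ) * (k - 1))) := by
    rw [Finset.sum_const, Finset.card_range, nsmul_eq_mul]; push_cast; ring
  have h1 : ∑ t ∈ range (n * k), (t : ℚ) = (n * k : ℚ) * (n * k - 1) / 2 := by
    rw [gauss1]; push_cast; ring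
  have h2 : ∑ t ∈ range (n * k), (t : ℚ) ^ 2
      = (n * k : ℚ) * (n * k - 1) * (2 * (n * k) - 1) / 6 := by
    rw [gauss2]; push_cast; ring
  have h3 : ∑ t ∈ range (n * k), ((t % k : ℕ) : ℚ) = n * (k * (k - 1) / 2) := sum_mod n k
  have h4 : ∑ t ∈ range (n * k), ((t % n : ℕ) : ℚ) = k * (n * (n - 1) / 2) := by
    rw [show n * k = k * n from mul_comm n k]; exact sum_mod k n
  have h5 : ∑ t ∈ range (n * k), (t : ℚ) * ((t % k : ℕ) : ℚ)
      = k * (k * (k - 1) / 2) * (n * (n - 1) / 2) + n * (k * (k - 1) * (2 * k - 1) / 6) :=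
    sum_t_mod n k
  have h6 : ∑ t ∈ range (n * k), (t : ℚ) * ((t % n : ℕ) : ℚ)
      = n * (n * (n - 1) / 2) * (k * (k - 1) / 2) + k * (n * (n - 1) * (2 * n - 1) / 6) := by
    rw [show n * k = k * n from mul_comm n k]; exact sum_t_mod k n
  have h7 : ∑ t ∈ range (n * k), ((t % k : ℕ) : ℚ) * ((t % n : ℕ) : ℚ)
      = (n * (n - 1) / 2 : ℚ) * (k * (k - 1) / 2) := by
    have h := crt_sum n k hn hk hco (fun x => (x : ℚ)) (fun x => (x : ℚ))
    rw [gauss1, gauss1] at h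
    rw [← h]
    exact Finset.sum_congr rfl fun t _ => mul_comm _ _
  have h8 : ∑ t ∈ range (n * k), (((k : ℚ) * (n - 1)) + ((n : ℚ) * (k - 1))) * (t : ℚ)
      = (((k : ℚ) * (n - 1)) + ((n : ℚ) * (k - 1))) * ((n * k : ℚ) * (n * k - 1) / 2) := by
    rw [← Finset.mul_sum, h1]
  have h9 : ∑ t ∈ range (n * k), ((k : ℚ) * (n - 1)) * ((t % n : ℕ) : ℚ)
      = ((k : ℚ) * (n - 1)) * (k * (n * (n - 1) / 2)) := by
    rw [← Finset.mul_sum, h4]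
  have h10 : ∑ t ∈ range (n * k), ((n : ℚ) * (k - 1)) * ((t % k : ℕ) : ℚ)
      = ((n : ℚ) * (k - 1)) * (n * (k * (k - 1) / 2)) := by
    rw [← Finset.mul_sum, h3]
  rw [Finset.sum_add_distrib, Finset.sum_sub_distrib, Finset.sum_sub_distrib,
    Finset.sum_add_distrib, Finset.sum_add_distrib, Finset.sum_sub_distrib,
    Finset.sum_add_distrib, hC, h2, h8, h9, h10, h6, h5, h7]


lemma T_identity (n k : ℕ) (hn : 0 < n) (hk : 0 < k) (hco : Nat.Coprime n k) :
    (k : ℚ) * (∑ i ∈ Ico 1 n, (i : ℚ) * ((k * i / n : ℕ) : ℚ))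
      + (n : ℚ) * (∑ j ∈ Ico 1 k, (j : ℚ) * ((n * j / k : ℕ) : ℚ))
    = (8 * (n : ℚ) ^ 2 * k ^ 2 - 9 * (n : ℚ) ^ 2 * k - 9 * (n : ℚ) * k ^ 2 + 9 * (n : ℚ) * k
        + (n : ℚ) ^ 2 + (k : ℚ) ^ 2 - 1) / 12 := by
  have hn0 : (n : ℚ) ≠ 0 := Nat.cast_ne_zero.mpr hn.ne'
  have hk0 : (k : ℚ) ≠ 0 := Nat.cast_ne_zero.mpr hk.ne'
  have hc := congrArg (Nat.cast (R := ℚ)) (key_count n k hn hk hco)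
  push_cast at hc
  have hL1 : ∑ i ∈ Ico 1 n, (k : ℚ) * (i : ℚ) * ((k * i / n : ℕ) : ℚ)
      = k * ∑ i ∈ Ico 1 n, (i : ℚ) * ((k * i / n : ℕ) : ℚ) := by
    rw [Finset.mul_sum]; exact Finset.sum_congr rfl fun i _ => by ring
  have hL2 : ∑ j ∈ Ico 1 k, (n : ℚ) * (j : ℚ) * ((n * j / k : ℕ) : ℚ)
      = n * ∑ j ∈ Ico 1 k, (j : ℚ) * ((n * j / k : ℕ) : ℚ) := by
    rw [Finset.mul_sum]; exact Finset.sum_congr rfl fun j _ => by ring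
  have hR : (∑ i ∈ Ico 1 n, ∑ j ∈ Ico 1 k, ((k : ℚ) * i + (n : ℚ) * j))
      = ((k : ℚ) - 1) * ((k : ℚ) * ((n : ℚ) * ((n : ℚ) - 1) / 2))
        + ((n : ℚ) - 1) * ((n : ℚ) * ((k : ℚ) * ((k : ℚ) - 1) / 2)) := by
    have hinner : ∀ i ∈ Ico 1 n, ∑ j ∈ Ico 1 k, ((k : ℚ) * i + (n : ℚ) * j)
        = ((k : ℚ) - 1) * ((k : ℚ) * (i : ℚ)) + (n : ℚ) * ((k : ℚ) * ((k : ℚ) - 1) / 2) := by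
      intro i _
      rw [Finset.sum_add_distrib, Finset.sum_const, Nat.card_Ico, ← Finset.mul_sum, ico_g1,
        nsmul_eq_mul, Nat.cast_sub hk]
      push_cast
      ring
    rw [Finset.sum_congr rfl hinner, Finset.sum_add_distrib, Finset.sum_const, Nat.card_Ico,
      nsmul_eq_mul, Nat.cast_sub hn, ← Finset.mul_sum, ← Finset.mul_sum, ico_g1]
    push_cast
    ring
  rw [hL1, hL2, hR] at hc
  have hS : (n : ℚ) * k * (∑ t ∈ range (n * k), ((n - 1 - t / k : ℕ) : ℚ) * ((k - 1 - t / n : ℕ) : ℚ))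
      = ((n * k) * (((k : ℚ) * (n - 1)) * ((n : ℚ) * (k - 1)))
          + (n * k : ℚ) * (n * k - 1) * (2 * (n * k) - 1) / 6
          - (((k : ℚ) * (n - 1)) + ((n : ℚ) * (k - 1))) * ((n * k : ℚ) * (n * k - 1) / 2)
          + ((k : ℚ) * (n - 1)) * ((k : ℚ) * (n * (n - 1) / 2))
          + ((n : ℚ) * (k - 1)) * ((n : ℚ) * (k * (k - 1) / 2))
          - ((n : ℚ) * (n * (n - 1) / 2) * (k * (k - 1) / 2) + k * (n * (n - 1) * (2 * n - 1) / 6))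
          - ((k : ℚ) * (k * (k - 1) / 2) * (n * (n - 1) / 2) + n * (k * (k - 1) * (2 * k - 1) / 6))
          + (n * (n - 1) / 2 : ℚ) * (k * (k - 1) / 2)) := by
    rw [M_eval n k hn hk hco]
    field_simp
  refine mul_left_cancel₀ (mul_ne_zero hn0 hk0) ?_
  linear_combination ((n : ℚ) * (k : ℚ)) * hc - hS




lemma ico_g2 (m : ℕ) : ∑ i ∈ Ico 1 m, (i : ℚ) ^ 2 = m * (m - 1) * (2 * m - 1) / 6 := by
  rcases Nat.eq_zero_or_pos m with h | h
  · subst h; simp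
  · rw [← gauss2, Finset.range_eq_Ico, Finset.sum_eq_sum_Ico_succ_bot h]
    simp

lemma dS_eval (n k : ℕ) (hn : 0 < n) (hk : 0 < k) (hco : Nat.Coprime n k) :
    dS 1 k n = ((k : ℚ) * ((n : ℚ) * ((n : ℚ) - 1) * (2 * (n : ℚ) - 1) / 6)
        - n * ∑ i ∈ Ico 1 n, (i : ℚ) * ((k * i / n : ℕ) : ℚ)) / (n : ℚ) ^ 2
      - ((n : ℚ) - 1) / 4 := by
  have hn0 : (n : ℚ) ≠ 0 := Nat.cast_ne_zero.mpr hn.ne'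
  rw [dS, Finset.range_eq_Ico, Finset.sum_eq_sum_Ico_succ_bot hn]
  have h0 : saw (((0 : ℕ) : ℚ) * ((1 : ℤ) : ℚ) / (n : ℚ)) *
      saw (((0 : ℕ) : ℚ) * (((k : ℕ) : ℤ) : ℚ) / (n : ℚ)) = 0 := by
    norm_num [saw]
  rw [h0, zero_add]
  have hterm : ∀ i ∈ Ico 1 n, saw ((i : ℚ) * ((1 : ℤ) : ℚ) / (n : ℚ)) *
        saw ((i : ℚ) * (((k : ℕ) : ℤ) : ℚ) / (n : ℚ))
      = ((i : ℚ) / n - 1/2) * (((k * i % n : ℕ) : ℚ) / n - 1/2) := by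
    intro i hi
    simp only [Finset.mem_Ico] at hi
    have e1 : (i : ℚ) * ((1 : ℤ) : ℚ) / (n : ℚ) = ((i : ℕ) : ℚ) / n := by push_cast; ring
    have e2 : (i : ℚ) * (((k : ℕ) : ℤ) : ℚ) / (n : ℚ) = ((k * i : ℕ) : ℚ) / n := by
      push_cast; ring
    have hd1 : ¬ n ∣ i := fun hd => absurd (Nat.le_of_dvd hi.1 hd) (by omega)
    rw [e1, e2, saw_nat_div i n hn hd1, saw_nat_div (k * i) n hn
      (not_dvd_aux n k i hco hi.1 hi.2), Nat.mod_eq_of_lt hi.2]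
  rw [Finset.sum_congr rfl hterm]
  have hexp : ∀ i ∈ Ico 1 n, ((i : ℚ) / n - 1/2) * (((k * i % n : ℕ) : ℚ) / n - 1/2)
      = (1 / (n : ℚ) ^ 2) * ((i : ℚ) * ((k * i % n : ℕ) : ℚ))
        - (1 / (2 * (n : ℚ))) * (i : ℚ) - (1 / (2 * (n : ℚ))) * ((k * i % n : ℕ) : ℚ)
        + 1/4 := by
    intro i _
    field_simp
    ring
  rw [Finset.sum_congr rfl hexp, Finset.sum_add_distrib, Finset.sum_sub_distrib,
    Finset.sum_sub_distrib, ← Finset.mul_sum, ← Finset.mul_sum, ← Finset.mul_sum,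
    Finset.sum_const, Nat.card_Ico, nsmul_eq_mul, ico_g1]
  -- ∑ i * (k*i % n)  =  k * ∑ i² - n * ∑ i * (k*i/n)
  have hA : ∑ i ∈ Ico 1 n, (i : ℚ) * ((k * i % n : ℕ) : ℚ)
      = k * ((n : ℚ) * ((n : ℚ) - 1) * (2 * (n : ℚ) - 1) / 6)
        - n * ∑ i ∈ Ico 1 n, (i : ℚ) * ((k * i / n : ℕ) : ℚ) := by
    have hmodd : ∀ i ∈ Ico 1 n, (i : ℚ) * ((k * i % n : ℕ) : ℚ)
        = k * (i : ℚ) ^ 2 - n * ((i : ℚ) * ((k * i / n : ℕ) : ℚ)) := by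
      intro i _
      have := congrArg (Nat.cast (R := ℚ)) (Nat.div_add_mod (k * i) n)
      push_cast at this
      nlinarith [this]
    rw [Finset.sum_congr rfl hmodd, Finset.sum_sub_distrib, ← Finset.mul_sum, ← Finset.mul_sum,
      ico_g2]
  -- ∑ (k*i % n) over Ico 1 n = n(n-1)/2
  have hP : ∑ i ∈ Ico 1 n, ((k * i % n : ℕ) : ℚ) = (n : ℚ) * ((n : ℚ) - 1) / 2 := by
    have h := sum_mulmod n k hn hco.symm (fun x => (x : ℚ))
    rw [gauss1] at h
    rw [Finset.range_eq_Ico, Finset.sum_eq_sum_Ico_succ_bot hn] at h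
    simp only [Nat.mul_zero, Nat.zero_mod, Nat.cast_zero, zero_add] at h
    exact h
  rw [hA, hP, Nat.cast_sub hn]
  push_cast
  field_simp
  ring




theorem stmt_3 (n k : ℕ) (hn : 0 < n) (hk : 0 < k) (hco : Nat.Coprime n k) :
    dS 1 k n + dS 1 n k = (1/12) * ((n:ℚ)/k + 1/((n:ℚ)*k) + (k:ℚ)/n) - 1/4 := by
  have hn0 : (n : ℚ) ≠ 0 := Nat.cast_ne_zero.mpr hn.ne'
  have hk0 : (k : ℚ) ≠ 0 := Nat.cast_ne_zero.mpr hk.ne'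
  rw [dS_eval n k hn hk hco, dS_eval k n hk hn hco.symm]
  have hT := T_identity n k hn hk hco
  field_simp
  linear_combination (-288 : ℚ) * hT
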